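/- Let z ≠ 0 and let f : ℝ → ℝ be continuously differentiable with compact support. Then Var[f(V)] = ∫_ℝ ∫_ℝ f'(x) f'(y) (Φ_z(min(x,y)) − Φ_z(x)Φ_z(y)) dx dy, where V ~ N(0, z²) and Φ_z is the distribution function of N(0, z²). -/

import Mathlib

open MeasureTheory ProbabilityTheory Set

/-- The distribution function of `N(0, z²)`. -/
noncomputable def gaussCDF (z x : ℝ) : ℝ :=
  ((gaussianReal 0 (z ^ 2).toNNReal) (Set.Iic x)).toReal

namespace GaussAux

lemma hvar {z : ℝ} (hz : z ≠ 0) : (z ^ 2).toNNReal ≠ 0 :=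
  (Real.toNNReal_pos.mpr (by positivity)).ne'

lemma noAtoms {z : ℝ} (hz : z ≠ 0) (t : ℝ) :
    gaussianReal 0 (z ^ 2).toNNReal {t} = 0 :=
  gaussianReal_absolutelyContinuous 0 (hvar hz) (measure_singleton t)

lemma cdf_nonneg (z t : ℝ) : 0 ≤ gaussCDF z t := ENNReal.toReal_nonneg

lemma cdf_le_one (z t : ℝ) : gaussCDF z t ≤ 1 := by
  have h : gaussianReal 0 (z ^ 2).toNNReal (Set.Iic t) ≤ 1 := prob_le_one
  have := ENNReal.toReal_mono ENNReal.one_ne_top h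
  simpa [gaussCDF] using this

lemma cdf_monotone (z : ℝ) : Monotone (gaussCDF z) := by
  intro a b hab
  exact ENNReal.toReal_mono (measure_ne_top _ _)
    (measure_mono (Set.Iic_subset_Iic.mpr hab))

lemma cdf_measurable (z : ℝ) : Measurable (gaussCDF z) :=
  (cdf_monotone z).measurable

lemma meas_Ici {z : ℝ} (hz : z ≠ 0) (t : ℝ) :
    ((gaussianReal 0 (z ^ 2).toNNReal) (Set.Ici t)).toReal = 1 - gaussCDF z t := by
  set μ := gaussianReal 0 (z ^ 2).toNNReal with hμ
  have h1 : μ (Set.Ici t) = μ (Set.Ioi t) :=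
    (measure_congr (Ioi_ae_eq_Ici' (noAtoms hz t))).symm
  have h2 : μ (Set.Ioi t) = 1 - μ (Set.Iic t) := by
    rw [← Set.compl_Iic, measure_compl measurableSet_Iic (measure_ne_top _ _), measure_univ]
  rw [h1, h2, ENNReal.toReal_sub_of_le prob_le_one ENNReal.one_ne_top, ENNReal.toReal_one]
  rfl

end GaussAux

theorem variance_eq_double_integral_of_cdf (z : ℝ) (hz : z ≠ 0) (f : ℝ → ℝ)
    (hf : ContDiff ℝ 1 f) (hsupp : HasCompactSupport f) :
    (∫ x, (f x) ^ 2 ∂(gaussianReal 0 (z ^ 2).toNNReal))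
        - (∫ x, f x ∂(gaussianReal 0 (z ^ 2).toNNReal)) ^ 2
      = ∫ x : ℝ, ∫ y : ℝ,
          deriv f x * deriv f y *
            (gaussCDF z (min x y) - gaussCDF z x * gaussCDF z y) := by
  classical
  set μ := gaussianReal 0 (z ^ 2).toNNReal with hμdef
  set φ := deriv f with hφdef
  have hφc : Continuous φ := hf.continuous_deriv le_rfl
  have hφs : HasCompactSupport φ := hsupp.deriv
  have hφint : Integrable φ := hφc.integrable_of_hasCompactSupport hφs
  set g : ℝ → ℝ → ℝ :=
    fun x v => φ x * ((Set.Ici x).indicator 1 v - (1 - gaussCDF z x)) with hgdef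
  -- pointwise indicator identity
  have hindic : ∀ v x, φ x * (Set.Ici x).indicator (1 : ℝ → ℝ) v
      = (Set.Iic v).indicator φ x := by
    intro v x
    by_cases h : x ≤ v
    · simp [Set.indicator_apply, h]
    · simp [Set.indicator_apply, h]
  -- Step A : ∫ x, φ x · 1_{x ≤ v} dx = f v
  have hA : ∀ v, ∫ x, φ x * (Set.Ici x).indicator (1 : ℝ → ℝ) v = f v := by
    intro v
    simp_rw [hindic v]
    rw [integral_indicator measurableSet_Iic]
    exact hsupp.integral_Iic_deriv_eq hf v
  have I1 : ∀ v, Integrable (fun x => φ x * (Set.Ici x).indicator (1 : ℝ → ℝ) v) := by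
    intro v
    exact (hφint.indicator measurableSet_Iic).congr (ae_of_all _ fun x => (hindic v x).symm)
  have I2 : Integrable (fun x => φ x * (1 - gaussCDF z x)) := by
    refine hφint.abs.mono' ?_ (ae_of_all _ fun x => ?_)
    · exact (hφc.aestronglyMeasurable.mul
        (measurable_const.sub (GaussAux.cdf_measurable z)).aestronglyMeasurable)
    · have h0 := GaussAux.cdf_nonneg z x
      have h1 := GaussAux.cdf_le_one z x
      rw [Real.norm_eq_abs, abs_mul]
      have : |1 - gaussCDF z x| ≤ 1 := by rw [abs_le]; constructor <;> linarith
      nlinarith [abs_nonneg (φ x)]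
  set c : ℝ := ∫ x, φ x * (1 - gaussCDF z x) with hcdef
  have hgB : ∀ v, ∫ x, g x v = f v - c := by
    intro v
    have h : (fun x => g x v)
        = fun x => φ x * (Set.Ici x).indicator (1 : ℝ → ℝ) v
            - φ x * (1 - gaussCDF z x) := by
      funext x; simp only [hgdef]; ring
    rw [h, integral_sub (I1 v) I2, hA v]
  -- m = c via Fubini
  have hm : ∫ v, f v ∂μ = c := by
    have hS : MeasurableSet {q : ℝ × ℝ | q.2 ≤ q.1} :=
      (isClosed_le continuous_snd continuous_fst).measurableSet
    have hval : ∀ q : ℝ × ℝ, φ q.2 * (Set.Ici q.2).indicator (1 : ℝ → ℝ) q.1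
        = φ q.2 * {q : ℝ × ℝ | q.2 ≤ q.1}.indicator (fun _ => (1 : ℝ)) q := by
      intro q
      by_cases h : q.2 ≤ q.1 <;> simp [Set.indicator_apply, h]
    have hbint : Integrable (fun q : ℝ × ℝ => |φ q.2|) (μ.prod volume) := by
      simpa using (integrable_const (1 : ℝ)).mul_prod hφint.abs
    have hswap : Integrable
        (Function.uncurry fun v x => φ x * (Set.Ici x).indicator (1 : ℝ → ℝ) v)
        (μ.prod volume) := by
      refine hbint.mono' ?_ (ae_of_all _ fun q => ?_)
      · have : (Function.uncurry fun v x => φ x * (Set.Ici x).indicator (1 : ℝ → ℝ) v)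
            = fun q : ℝ × ℝ => φ q.2 * {q : ℝ × ℝ | q.2 ≤ q.1}.indicator (fun _ => (1 : ℝ)) q := by
          funext q; exact hval q
        rw [this]
        exact ((hφc.measurable.comp measurable_snd).mul
          (measurable_const.indicator hS)).aestronglyMeasurable
      · rw [Function.uncurry, Real.norm_eq_abs, abs_mul]
        have : |(Set.Ici q.2).indicator (1 : ℝ → ℝ) q.1| ≤ 1 := by
          by_cases h : q.2 ≤ q.1 <;> simp [Set.indicator_apply, h]
        nlinarith [abs_nonneg (φ q.2)]
    calc ∫ v, f v ∂μ
        = ∫ v, ∫ x, φ x * (Set.Ici x).indicator (1 : ℝ → ℝ) v ∂volume ∂μ :=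
          integral_congr_ae (ae_of_all _ fun v => (hA v).symm)
      _ = ∫ x, ∫ v, φ x * (Set.Ici x).indicator (1 : ℝ → ℝ) v ∂μ ∂volume :=
          integral_integral_swap hswap
      _ = c := by
          refine integral_congr_ae (ae_of_all _ fun x => ?_)
          beta_reduce
          rw [integral_const_mul, integral_indicator_one measurableSet_Ici, measureReal_def,
            GaussAux.meas_Ici hz]
  -- variance as shifted second moment
  have hfi : Integrable f μ := hf.continuous.integrable_of_hasCompactSupport hsupp
  have hf2 : Integrable (fun v => f v ^ 2) μ := by
    have h1 : Continuous fun v => f v ^ 2 := hf.continuous.pow 2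
    have h2 : HasCompactSupport fun v => f v ^ 2 := by
      have := hsupp.comp_left (g := fun t : ℝ => t ^ 2) (by simp)
      simpa [Function.comp_def] using this
    exact h1.integrable_of_hasCompactSupport h2
  have hvar : (∫ v, f v ^ 2 ∂μ) - (∫ v, f v ∂μ) ^ 2 = ∫ v, (f v - c) ^ 2 ∂μ := by
    have hexp : (fun v => (f v - c) ^ 2)
        = fun v => f v ^ 2 - 2 * c * f v + c ^ 2 := by funext v; ring
    have ia : Integrable (fun v => f v ^ 2 - 2 * c * f v) μ := hf2.sub (hfi.const_mul (2 * c))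
    have ib : Integrable (fun v => 2 * c * f v) μ := hfi.const_mul (2 * c)
    have h1 : ∫ v, (f v - c) ^ 2 ∂μ
        = (∫ v, f v ^ 2 ∂μ) - 2 * c * (∫ v, f v ∂μ) + c ^ 2 := by
      rw [hexp, integral_add ia (integrable_const _),
        integral_sub hf2 ib, integral_const_mul, integral_const]
      simp
    rw [h1, hm]; ring
  -- bound on g
  have hgbound : ∀ x v, |g x v| ≤ |φ x| := by
    intro x v
    have h0 := GaussAux.cdf_nonneg z x
    have h1 := GaussAux.cdf_le_one z x
    have h2 : |(Set.Ici x).indicator (1 : ℝ → ℝ) v - (1 - gaussCDF z x)| ≤ 1 := by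
      by_cases h : x ≤ v <;>
        · simp only [Set.indicator_apply, Set.mem_Ici, h, if_true, if_false, Pi.one_apply]
          rw [abs_le]; constructor <;> simp [h] <;> linarith
    calc |g x v| = |φ x| * |(Set.Ici x).indicator (1 : ℝ → ℝ) v - (1 - gaussCDF z x)| := by
          rw [hgdef]; exact abs_mul _ _
      _ ≤ |φ x| * 1 := mul_le_mul_of_nonneg_left h2 (abs_nonneg _)
      _ = |φ x| := mul_one _
  -- joint measurability of g
  have hgmeas : Measurable (fun q : ℝ × ℝ => g q.1 q.2) := by
    have hT : MeasurableSet {q : ℝ × ℝ | q.1 ≤ q.2} :=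
      (isClosed_le continuous_fst continuous_snd).measurableSet
    have h1 : (fun q : ℝ × ℝ => g q.1 q.2)
        = fun q => φ q.1 * ({q : ℝ × ℝ | q.1 ≤ q.2}.indicator (fun _ => (1 : ℝ)) q
            - (1 - gaussCDF z q.1)) := by
      funext q
      by_cases h : q.1 ≤ q.2 <;> simp [hgdef, Set.indicator_apply, h]
    rw [h1]
    exact (hφc.measurable.comp measurable_fst).mul
      ((measurable_const.indicator hT).sub
        (measurable_const.sub ((GaussAux.cdf_measurable z).comp measurable_fst)))
  -- big Fubini integrability
  have hbig : Integrable
      (Function.uncurry fun (v : ℝ) (p : ℝ × ℝ) => g p.1 v * g p.2 v)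
      (μ.prod (volume.prod volume)) := by
    have hbint : Integrable (fun r : ℝ × (ℝ × ℝ) => |φ r.2.1| * |φ r.2.2|)
        (μ.prod (volume.prod volume)) := by
      simpa using (integrable_const (1 : ℝ)).mul_prod (hφint.abs.mul_prod hφint.abs)
    refine hbint.mono' ?_ (ae_of_all _ fun r => ?_)
    · have m1 : Measurable fun r : ℝ × (ℝ × ℝ) => g r.2.1 r.1 :=
        hgmeas.comp (measurable_snd.fst.prodMk measurable_fst)
      have m2 : Measurable fun r : ℝ × (ℝ × ℝ) => g r.2.2 r.1 :=
        hgmeas.comp (measurable_snd.snd.prodMk measurable_fst)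
      exact (m1.mul m2).aestronglyMeasurable
    · rw [Function.uncurry, Real.norm_eq_abs, abs_mul]
      exact mul_le_mul (hgbound _ _) (hgbound _ _) (abs_nonneg _) (abs_nonneg _)
  -- square as double integral
  have hsq : ∀ v, (f v - c) ^ 2
      = ∫ p : ℝ × ℝ, g p.1 v * g p.2 v ∂(volume.prod volume) := by
    intro v
    rw [sq, ← hgB v]
    exact (integral_prod_mul (fun x => g x v) (fun y => g y v)).symm
  -- inner integral computation
  have hinner : ∀ x y, ∫ v, g x v * g y v ∂μ
      = φ x * φ y * (gaussCDF z (min x y) - gaussCDF z x * gaussCDF z y) := by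
    intro x y
    have hiix : Integrable ((Set.Ici x).indicator (1 : ℝ → ℝ)) μ :=
      (integrable_const 1).indicator measurableSet_Ici
    have hiiy : Integrable ((Set.Ici y).indicator (1 : ℝ → ℝ)) μ :=
      (integrable_const 1).indicator measurableSet_Ici
    have hiim : Integrable ((Set.Ici (max x y)).indicator (1 : ℝ → ℝ)) μ :=
      (integrable_const 1).indicator measurableSet_Ici
    have hexp : ∀ v, g x v * g y v
        = φ x * φ y * ((Set.Ici (max x y)).indicator (1 : ℝ → ℝ) v
            - (1 - gaussCDF z y) * (Set.Ici x).indicator (1 : ℝ → ℝ) v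
            - (1 - gaussCDF z x) * (Set.Ici y).indicator (1 : ℝ → ℝ) v
            + (1 - gaussCDF z x) * (1 - gaussCDF z y)) := by
      intro v
      rcases le_or_gt x v with h1 | h1 <;> rcases le_or_gt y v with h2 | h2 <;>
        simp [hgdef, Set.indicator_apply, max_le_iff, h1, h2, not_le.mpr, le_of_lt] <;>
        ring
    simp_rw [hexp]
    rw [integral_const_mul]
    congr 1
    have jx : Integrable (fun v => (1 - gaussCDF z y) * (Set.Ici x).indicator (1 : ℝ → ℝ) v) μ :=
      hiix.const_mul _
    have jy : Integrable (fun v => (1 - gaussCDF z x) * (Set.Ici y).indicator (1 : ℝ → ℝ) v) μ :=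
      hiiy.const_mul _
    have j1 : Integrable (fun v => (Set.Ici (max x y)).indicator (1 : ℝ → ℝ) v
        - (1 - gaussCDF z y) * (Set.Ici x).indicator (1 : ℝ → ℝ) v) μ := hiim.sub jx
    have j2 : Integrable (fun v => (Set.Ici (max x y)).indicator (1 : ℝ → ℝ) v
        - (1 - gaussCDF z y) * (Set.Ici x).indicator (1 : ℝ → ℝ) v
        - (1 - gaussCDF z x) * (Set.Ici y).indicator (1 : ℝ → ℝ) v) μ := j1.sub jy
    rw [integral_add j2 (integrable_const _), integral_sub j1 jy,
      integral_sub hiim jx, integral_const_mul, integral_const_mul,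
      integral_indicator_one measurableSet_Ici, integral_indicator_one measurableSet_Ici,
      integral_indicator_one measurableSet_Ici, integral_const]
    simp only [measureReal_def]
    rw [GaussAux.meas_Ici hz, GaussAux.meas_Ici hz, GaussAux.meas_Ici hz]
    simp only [measure_univ, ENNReal.toReal_one, one_smul]
    rcases le_total x y with h | h
    · rw [max_eq_right h, min_eq_left h]; ring
    · rw [max_eq_left h, min_eq_right h]; ring
  -- integrability of the final kernel
  have hK : Integrable (Function.uncurry fun x y : ℝ =>
      φ x * φ y * (gaussCDF z (min x y) - gaussCDF z x * gaussCDF z y))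
      (volume.prod volume) := by
    have hbint : Integrable (fun p : ℝ × ℝ => |φ p.1| * |φ p.2|) (volume.prod volume) :=
      hφint.abs.mul_prod hφint.abs
    refine hbint.mono' ?_ (ae_of_all _ fun p => ?_)
    · exact (((hφc.measurable.comp measurable_fst).mul
        (hφc.measurable.comp measurable_snd)).mul
        (((GaussAux.cdf_measurable z).comp (measurable_fst.min measurable_snd)).sub
          (((GaussAux.cdf_measurable z).comp measurable_fst).mul
            ((GaussAux.cdf_measurable z).comp measurable_snd)))).aestronglyMeasurable
    · rw [Function.uncurry, Real.norm_eq_abs, abs_mul, abs_mul]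
      have h0m := GaussAux.cdf_nonneg z (min p.1 p.2)
      have h1m := GaussAux.cdf_le_one z (min p.1 p.2)
      have h0x := GaussAux.cdf_nonneg z p.1
      have h1x := GaussAux.cdf_le_one z p.1
      have h0y := GaussAux.cdf_nonneg z p.2
      have h1y := GaussAux.cdf_le_one z p.2
      have hk : |gaussCDF z (min p.1 p.2) - gaussCDF z p.1 * gaussCDF z p.2| ≤ 1 := by
        rw [abs_le]; constructor <;> nlinarith
      calc |φ p.1| * |φ p.2| * |gaussCDF z (min p.1 p.2) - gaussCDF z p.1 * gaussCDF z p.2|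
          ≤ |φ p.1| * |φ p.2| * 1 :=
            mul_le_mul_of_nonneg_left hk (by positivity)
        _ = |φ p.1| * |φ p.2| := mul_one _
  -- final chain
  calc (∫ v, f v ^ 2 ∂μ) - (∫ v, f v ∂μ) ^ 2
      = ∫ v, (f v - c) ^ 2 ∂μ := hvar
    _ = ∫ v, ∫ p : ℝ × ℝ, g p.1 v * g p.2 v ∂(volume.prod volume) ∂μ :=
        integral_congr_ae (ae_of_all _ fun v => hsq v)
    _ = ∫ p : ℝ × ℝ, ∫ v, g p.1 v * g p.2 v ∂μ ∂(volume.prod volume) :=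
        integral_integral_swap hbig
    _ = ∫ p : ℝ × ℝ, φ p.1 * φ p.2 *
          (gaussCDF z (min p.1 p.2) - gaussCDF z p.1 * gaussCDF z p.2)
          ∂(volume.prod volume) :=
        integral_congr_ae (ae_of_all _ fun p => hinner p.1 p.2)
    _ = ∫ x : ℝ, ∫ y : ℝ, φ x * φ y *
          (gaussCDF z (min x y) - gaussCDF z x * gaussCDF z y) :=
        (integral_integral hK).symm
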